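/- Let α > 1, w_o > 0 with w_o + e^{-w_o} = α, γ = w_o e^{w_o}, and define F(t) = (w_o/α) e^{-t/α} for t ≥ 0 and F(t) = 1 − 1/(1 + γ e^{-t}) for t < 0, and G(t) = α/(1 + γ e^t) for t ≥ 0, G(t) = 1 for t < 0. Then F(t) = exp(−(1/α) ∫_{−t}^∞ G(z) dz) for all t ∈ ℝ. -/

import Mathlib

open MeasureTheory Set Filter Topology

lemma aux_pos (γ : ℝ) (hγ : 0 < γ) (z : ℝ) : 0 < 1 + γ * Real.exp z := by
  positivity

lemma aux_integrable (α γ : ℝ) (hα : 0 ≤ α) (hγ : 0 < γ) (s : ℝ) :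
    IntegrableOn (fun z => α / (1 + γ * Real.exp z)) (Set.Ioi s) := by
  have hcont : Continuous (fun z : ℝ => α / (1 + γ * Real.exp z)) :=
    continuous_const.div (by continuity) (fun z => (aux_pos γ hγ z).ne')
  apply Integrable.mono' (g := fun z => (α / γ) * Real.exp (-1 * z))
  · exact (exp_neg_integrableOn_Ioi s one_pos).const_mul (α / γ)
  · exact hcont.aestronglyMeasurable
  · filter_upwards with z
    have h1 := aux_pos γ hγ z
    have h2 := Real.exp_pos z
    rw [Real.norm_eq_abs, abs_of_nonneg (div_nonneg hα h1.le)]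
    have heq : α / γ * Real.exp (-1 * z) = α / (γ * Real.exp z) := by
      rw [neg_one_mul, Real.exp_neg]
      field_simp
    rw [heq]
    gcongr
    linarith

lemma aux_integral (α γ : ℝ) (hα : 0 ≤ α) (hγ : 0 < γ) (s : ℝ) :
    ∫ z in Set.Ioi s, α / (1 + γ * Real.exp z)
      = α * (Real.log (1 + γ * Real.exp s) - s - Real.log γ) := by
  have key : ∫ z in Set.Ioi s, α / (1 + γ * Real.exp z)
      = -(α * Real.log γ) - α * (s - Real.log (1 + γ * Real.exp s)) := by
    apply integral_Ioi_of_hasDerivAt_of_tendsto'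
      (f := fun z => α * (z - Real.log (1 + γ * Real.exp z)))
    · intro x _
      have h1 := aux_pos γ hγ x
      have hd : HasDerivAt (fun z => α * (z - Real.log (1 + γ * Real.exp z)))
          (α * (1 - γ * Real.exp x / (1 + γ * Real.exp x))) x :=
        ((hasDerivAt_id x).sub
          ((((Real.hasDerivAt_exp x).const_mul γ).const_add 1).log h1.ne')).const_mul α
      convert hd using 1
      · rfl
      · rfl
      rw [div_eq_iff h1.ne', mul_assoc, sub_mul, div_mul_cancel₀ _ h1.ne']
      ring
    · exact aux_integrable α γ hα hγ s
    · have hfun : (fun z => α * (z - Real.log (1 + γ * Real.exp z)))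
          = fun z => -(α * Real.log (Real.exp (-z) + γ)) := by
        funext z
        have h2 := Real.exp_pos z
        have h3 : (0:ℝ) < Real.exp (-z) + γ := by positivity
        have heq : 1 + γ * Real.exp z = Real.exp z * (Real.exp (-z) + γ) := by
          rw [mul_add, ← Real.exp_add]
          simp [mul_comm]
        rw [heq, Real.log_mul h2.ne' h3.ne', Real.log_exp]
        ring
      rw [hfun]
      have h4 : Tendsto (fun z : ℝ => Real.exp (-z) + γ) atTop (𝓝 (0 + γ)) :=
        (Real.tendsto_exp_neg_atTop_nhds_zero).add tendsto_const_nhds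
      rw [zero_add] at h4
      exact (((Real.continuousAt_log hγ.ne').tendsto.comp h4).const_mul α).neg
  rw [key]; ring

theorem F_integral_eq (α w γ : ℝ) (hα : 1 < α) (hw : 0 < w)
    (hwα : w + Real.exp (-w) = α) (hγ : γ = w * Real.exp w)
    (F G : ℝ → ℝ)
    (hF : ∀ t : ℝ, F t = if 0 ≤ t then (w / α) * Real.exp (-t / α)
      else 1 - 1 / (1 + γ * Real.exp (-t)))
    (hG : ∀ t : ℝ, G t = if 0 ≤ t then α / (1 + γ * Real.exp t) else 1) :
    ∀ t : ℝ, F t = Real.exp (-(1 / α) * ∫ z in Set.Ici (-t), G z) := by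
  have hα0 : (0:ℝ) < α := by linarith
  have hγ0 : 0 < γ := by rw [hγ]; positivity
  intro t
  rw [hF, MeasureTheory.integral_Ici_eq_integral_Ioi]
  by_cases ht : 0 ≤ t
  · rw [if_pos ht]
    have hsplit : Set.Ioc (-t) 0 ∪ Set.Ioi 0 = Set.Ioi (-t) :=
      Set.Ioc_union_Ioi_eq_Ioi (by linarith)
    have hae : G =ᵐ[volume.restrict (Set.Ioc (-t) 0)] fun _ => (1:ℝ) := by
      rw [EventuallyEq, ae_restrict_iff' measurableSet_Ioc]
      have hne : ∀ᵐ x : ℝ, x ≠ 0 := by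
        rw [ae_iff]
        simpa using measure_singleton (0:ℝ)
      filter_upwards [hne] with x hx hmem
      rw [hG, if_neg (not_le.2 (lt_of_le_of_ne hmem.2 hx))]
    have hInt1 : IntegrableOn G (Set.Ioc (-t) 0) :=
      (integrableOn_const measure_Ioc_lt_top.ne).congr hae.symm
    have hEq2 : Set.EqOn G (fun z => α / (1 + γ * Real.exp z)) (Set.Ioi 0) := by
      intro z hz
      rw [hG, if_pos (le_of_lt hz)]
    have hInt2 : IntegrableOn G (Set.Ioi 0) :=
      (aux_integrable α γ hα0.le hγ0 0).congr_fun hEq2.symm measurableSet_Ioi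
    rw [← hsplit, MeasureTheory.setIntegral_union (Set.Ioc_disjoint_Ioi le_rfl)
      measurableSet_Ioi hInt1 hInt2]
    have hI1 : ∫ z in Set.Ioc (-t) 0, G z = t := by
      rw [integral_congr_ae hae]
      simp [Real.volume_Ioc]
      exact ht
    have hI2 : ∫ z in Set.Ioi 0, G z = α * (Real.log (1 + γ) - Real.log γ) := by
      rw [MeasureTheory.setIntegral_congr_fun measurableSet_Ioi hEq2]
      rw [aux_integral α γ hα0.le hγ0 0]
      simp
    rw [hI1, hI2]
    have h1γ : (0:ℝ) < 1 + γ := by positivity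
    have hexp : -(1/α) * (t + α * (Real.log (1 + γ) - Real.log γ))
        = -t/α + (Real.log γ - Real.log (1 + γ)) := by
      field_simp
      ring
    rw [hexp, Real.exp_add, Real.exp_sub, Real.exp_log hγ0, Real.exp_log h1γ]
    have hkey : γ / (1 + γ) = w / α := by
      rw [hγ, ← hwα, Real.exp_neg]
      have := Real.exp_pos w
      field_simp
      ring
    rw [hkey]
    ring
  · rw [if_neg ht]
    push_neg at ht
    have hEq : Set.EqOn G (fun z => α / (1 + γ * Real.exp z)) (Set.Ioi (-t)) := by
      intro z hz
      have : (0:ℝ) < z := lt_trans (by linarith) hz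
      rw [hG, if_pos this.le]
    rw [MeasureTheory.setIntegral_congr_fun measurableSet_Ioi hEq,
      aux_integral α γ hα0.le hγ0 (-t)]
    have hu : (0:ℝ) < 1 + γ * Real.exp (-t) := aux_pos γ hγ0 (-t)
    have hexp : -(1/α) * (α * (Real.log (1 + γ * Real.exp (-t)) - (-t) - Real.log γ))
        = Real.log γ + (-t) - Real.log (1 + γ * Real.exp (-t)) := by
      field_simp
      ring
    rw [hexp, Real.exp_sub, Real.exp_add, Real.exp_log hγ0, Real.exp_log hu]
    field_simp
    ring
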